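/- Let A, B be symmetric real n×n matrices such that I + B is positive definite, and let λᵢ be a real number. Then the number of eigenvalues of A that are less than λᵢ equals the number of eigenvalues λ of the generalized eigenvalue problem (A + λᵢ B)u = λ(I + B)u that are less than λᵢ; in particular, λᵢ is the i-th largest eigenvalue of A if and only if λᵢ is the i-th largest eigenvalue of the generalized eigenvalue problem (A + λᵢ B)u = λ(I + B)u. -/

import Mathlib

open Matrix

/-- The positive semidefinite square root of a positive semidefinite matrix
(the definition `Matrix.PosSemidef.sqrt` of the older Mathlib, since removed). -/
noncomputable def Matrix.PosSemidef.sqrt {n 𝕜 : Type*} [Fintype n] [RCLike 𝕜] [PartialOrder 𝕜] [DecidableEq n]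
    {A : Matrix n n 𝕜} (hA : A.PosSemidef) : Matrix n n 𝕜 :=
  (hA.1.eigenvectorUnitary : Matrix n n 𝕜) *
    diagonal (((↑) : ℝ → 𝕜) ∘ Real.sqrt ∘ hA.1.eigenvalues) *
  (star hA.1.eigenvectorUnitary : Matrix n n 𝕜)


namespace SylAux

variable {n : ℕ}

lemma sqrt_mul_self' {A : Matrix (Fin n) (Fin n) ℝ} (hA : A.PosSemidef) :
    hA.sqrt * hA.sqrt = A := by
  have hU : (star hA.1.eigenvectorUnitary : Matrix (Fin n) (Fin n) ℝ) *
      (hA.1.eigenvectorUnitary : Matrix (Fin n) (Fin n) ℝ) = 1 := Unitary.coe_star_mul_self _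
  have hD : diagonal ((RCLike.ofReal : ℝ → ℝ) ∘ Real.sqrt ∘ hA.1.eigenvalues) *
      diagonal ((RCLike.ofReal : ℝ → ℝ) ∘ Real.sqrt ∘ hA.1.eigenvalues)
        = diagonal (RCLike.ofReal ∘ hA.1.eigenvalues) := by
    rw [diagonal_mul_diagonal]; congr 1; funext i
    simp [Real.mul_self_sqrt (hA.eigenvalues_nonneg i)]
  conv_rhs => rw [hA.1.spectral_theorem, Unitary.conjStarAlgAut_apply]
  rw [Matrix.PosSemidef.sqrt, ← hD]
  simp only [Matrix.mul_assoc]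
  rw [← Matrix.mul_assoc (star _) _ _, hU, Matrix.one_mul]

lemma sqrt_conjTranspose' {A : Matrix (Fin n) (Fin n) ℝ} (hA : A.PosSemidef) :
    (hA.sqrt)ᴴ = hA.sqrt := by
  simp [Matrix.PosSemidef.sqrt, Matrix.conjTranspose_mul, Matrix.mul_assoc,
    Matrix.star_eq_conjTranspose, Matrix.conjTranspose_eq_transpose_of_trivial]

lemma inner_eq_dot (x y : EuclideanSpace ℝ (Fin n)) :
    (inner ℝ x y : ℝ) = (x : Fin n → ℝ) ⬝ᵥ (y : Fin n → ℝ) := by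
  rw [EuclideanSpace.inner_eq_star_dotProduct, star_trivial, dotProduct_comm]

lemma repr_mulVec {M : Matrix (Fin n) (Fin n) ℝ} (hM : M.IsHermitian)
    (x : EuclideanSpace ℝ (Fin n)) (j : Fin n) :
    hM.eigenvectorBasis.repr (WithLp.toLp 2 (M *ᵥ x : Fin n → ℝ)) j
      = hM.eigenvalues j * hM.eigenvectorBasis.repr x j := by
  have hMt : Mᵀ = M := by rw [← Matrix.conjTranspose_eq_transpose_of_trivial]; exact hM.eq
  rw [OrthonormalBasis.repr_apply_apply, OrthonormalBasis.repr_apply_apply,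
    inner_eq_dot, inner_eq_dot, WithLp.ofLp_toLp]
  have h1 : (hM.eigenvectorBasis j : Fin n → ℝ) ⬝ᵥ (M *ᵥ x)
      = (M *ᵥ (hM.eigenvectorBasis j : Fin n → ℝ)) ⬝ᵥ x := by
    rw [Matrix.dotProduct_mulVec, ← Matrix.mulVec_transpose, hMt]
  have h2 : M *ᵥ (hM.eigenvectorBasis j : Fin n → ℝ)
      = hM.eigenvalues j • (hM.eigenvectorBasis j : Fin n → ℝ) :=
    hM.mulVec_eigenvectorBasis j
  rw [h1, h2, smul_dotProduct, smul_eq_mul]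


lemma quad_expand {M : Matrix (Fin n) (Fin n) ℝ} (hM : M.IsHermitian) (t : ℝ)
    (x : EuclideanSpace ℝ (Fin n)) :
    (x : Fin n → ℝ) ⬝ᵥ (M *ᵥ x) - t * ((x : Fin n → ℝ) ⬝ᵥ x)
      = ∑ j, (hM.eigenvalues j - t) * (hM.eigenvectorBasis.repr x j)^2 := by
  set b := hM.eigenvectorBasis with hb
  have e1 : (x : Fin n → ℝ) ⬝ᵥ (M *ᵥ x)
      = (inner ℝ x ((WithLp.toLp 2 (M *ᵥ x : Fin n → ℝ))) : ℝ) := by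
    rw [inner_eq_dot, WithLp.ofLp_toLp]
  have e2 : (x : Fin n → ℝ) ⬝ᵥ (x : Fin n → ℝ) = (inner ℝ x x : ℝ) := (inner_eq_dot _ _).symm
  rw [e1, e2, ← b.repr.inner_map_map x ((WithLp.toLp 2 (M *ᵥ x : Fin n → ℝ))),
    ← b.repr.inner_map_map x x, inner_eq_dot, inner_eq_dot]
  have e3 : ∀ j, (b.repr ((WithLp.toLp 2 (M *ᵥ x : Fin n → ℝ)))) j
      = hM.eigenvalues j * b.repr x j := repr_mulVec hM x
  simp only [dotProduct]
  rw [Finset.mul_sum, ← Finset.sum_sub_distrib]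
  refine Finset.sum_congr rfl fun j _ => ?_
  rw [e3 j]
  ring

lemma mem_span_repr_zero {M : Matrix (Fin n) (Fin n) ℝ} (hM : M.IsHermitian)
    {P : Fin n → Prop} {x : EuclideanSpace ℝ (Fin n)}
    (hx : x ∈ Submodule.span ℝ (Set.range fun j : {j // P j} => hM.eigenvectorBasis j))
    {j : Fin n} (hj : ¬ P j) : hM.eigenvectorBasis.repr x j = 0 := by
  set b := hM.eigenvectorBasis with hb
  have hrange : (Set.range fun j : {j // P j} => b j) = ⇑b.toBasis '' {j | P j} := by
    rw [Set.image_eq_range, OrthonormalBasis.coe_toBasis]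
    rfl
  rw [hrange] at hx
  have := (b.toBasis.mem_span_image).mp hx
  have hjs : j ∉ (b.toBasis.repr x).support := fun h => hj (this h)
  have h0 : b.toBasis.repr x j = 0 := Finsupp.notMem_support_iff.mp hjs
  rw [← b.coe_toBasis_repr_apply]
  exact h0

lemma exists_repr_ne_zero {M : Matrix (Fin n) (Fin n) ℝ} (hM : M.IsHermitian)
    {x : EuclideanSpace ℝ (Fin n)} (hx : x ≠ 0) :
    ∃ j, hM.eigenvectorBasis.repr x j ≠ 0 := by
  by_contra h
  push_neg at h
  apply hx
  have : hM.eigenvectorBasis.repr x = 0 := by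
    ext j; exact h j
  simpa using congrArg hM.eigenvectorBasis.repr.symm this

lemma quad_neg_on_span {M : Matrix (Fin n) (Fin n) ℝ} (hM : M.IsHermitian) (t : ℝ)
    {P : Fin n → Prop} (hP : ∀ j, P j → hM.eigenvalues j < t)
    {x : EuclideanSpace ℝ (Fin n)}
    (hx : x ∈ Submodule.span ℝ (Set.range fun j : {j // P j} => hM.eigenvectorBasis j))
    (hx0 : x ≠ 0) :
    (x : Fin n → ℝ) ⬝ᵥ (M *ᵥ x) - t * ((x : Fin n → ℝ) ⬝ᵥ x) < 0 := by
  rw [quad_expand hM t x]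
  obtain ⟨j0, hj0⟩ := exists_repr_ne_zero hM hx0
  have hPj0 : P j0 := by
    by_contra h
    exact hj0 (mem_span_repr_zero hM hx h)
  have : ∑ j, (hM.eigenvalues j - t) * (hM.eigenvectorBasis.repr x j)^2
      < ∑ _j : Fin n, (0:ℝ) := by
    refine Finset.sum_lt_sum (fun j _ => ?_) ⟨j0, Finset.mem_univ _, ?_⟩
    · by_cases hPj : P j
      · exact mul_nonpos_of_nonpos_of_nonneg (by linarith [hP j hPj]) (sq_nonneg _)
      · rw [mem_span_repr_zero hM hx hPj]; simp
    · exact mul_neg_of_neg_of_pos (by linarith [hP j0 hPj0]) (by positivity)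
  simpa using this

lemma quad_nonneg_on_span {M : Matrix (Fin n) (Fin n) ℝ} (hM : M.IsHermitian) (t : ℝ)
    {P : Fin n → Prop} (hP : ∀ j, P j → t ≤ hM.eigenvalues j)
    {x : EuclideanSpace ℝ (Fin n)}
    (hx : x ∈ Submodule.span ℝ (Set.range fun j : {j // P j} => hM.eigenvectorBasis j)) :
    0 ≤ (x : Fin n → ℝ) ⬝ᵥ (M *ᵥ x) - t * ((x : Fin n → ℝ) ⬝ᵥ x) := by
  rw [quad_expand hM t x]
  refine Finset.sum_nonneg fun j _ => ?_
  by_cases hPj : P j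
  · exact mul_nonneg (by linarith [hP j hPj]) (sq_nonneg _)
  · rw [mem_span_repr_zero hM hx hPj]; simp

lemma finrank_span_eigen {M : Matrix (Fin n) (Fin n) ℝ} (hM : M.IsHermitian)
    (P : Fin n → Prop) [DecidablePred P] :
    Module.finrank ℝ (Submodule.span ℝ
        (Set.range fun j : {j // P j} => hM.eigenvectorBasis j))
      = Fintype.card {j // P j} := by
  have hli : LinearIndependent ℝ (fun j : {j // P j} => hM.eigenvectorBasis j) := by
    have := hM.eigenvectorBasis.toBasis.linearIndependent
    rw [OrthonormalBasis.coe_toBasis] at this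
    exact this.comp Subtype.val Subtype.val_injective
  exact finrank_span_eq_card hli


lemma card_le {M N : Matrix (Fin n) (Fin n) ℝ} (hM : M.IsHermitian) (hN : N.IsHermitian)
    (t : ℝ) (R : Matrix (Fin n) (Fin n) ℝ) (hR : Function.Injective (R.mulVec))
    (hq : ∀ y : Fin n → ℝ,
      (R *ᵥ y) ⬝ᵥ (N *ᵥ (R *ᵥ y)) - t * ((R *ᵥ y) ⬝ᵥ (R *ᵥ y))
        = y ⬝ᵥ (M *ᵥ y) - t * (y ⬝ᵥ y)) :
    Fintype.card {j // hM.eigenvalues j < t} ≤ Fintype.card {j // hN.eigenvalues j < t} := by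
  classical
  set W : Submodule ℝ (EuclideanSpace ℝ (Fin n)) := Submodule.span ℝ
    (Set.range fun j : {j // hM.eigenvalues j < t} => hM.eigenvectorBasis j) with hW
  set U : Submodule ℝ (EuclideanSpace ℝ (Fin n)) := Submodule.span ℝ
    (Set.range fun j : {j // ¬ hN.eigenvalues j < t} => hN.eigenvectorBasis j) with hU
  let fR : EuclideanSpace ℝ (Fin n) →ₗ[ℝ] EuclideanSpace ℝ (Fin n) := Matrix.toEuclideanLin R
  have hfR : Function.Injective fR := fun a b h =>
    WithLp.ofLp_injective 2 (hR (congrArg WithLp.ofLp h))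
  have hdimW : Module.finrank ℝ (W.map fR) = Fintype.card {j // hM.eigenvalues j < t} := by
    rw [← LinearEquiv.finrank_eq (Submodule.equivMapOfInjective fR hfR W),
      hW, finrank_span_eigen]
  have hdimU : Module.finrank ℝ U = Fintype.card {j // ¬ hN.eigenvalues j < t} :=
    finrank_span_eigen hN _
  have hdisj : W.map fR ⊓ U = ⊥ := by
    rw [Submodule.eq_bot_iff]
    rintro x hx
    obtain ⟨hx1, hx2⟩ := Submodule.mem_inf.mp hx
    by_contra hx0
    obtain ⟨y, hyW, rfl⟩ := hx1
    have hy0 : y ≠ 0 := by rintro rfl; exact hx0 (map_zero fR)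
    have h1 : (fR y : Fin n → ℝ) ⬝ᵥ (N *ᵥ (fR y)) - t * ((fR y : Fin n → ℝ) ⬝ᵥ (fR y)) < 0 := by
      have := quad_neg_on_span hM t (P := fun j => hM.eigenvalues j < t)
        (fun j h => h) hyW hy0
      have hq' := hq y
      calc (fR y : Fin n → ℝ) ⬝ᵥ (N *ᵥ (fR y)) - t * ((fR y : Fin n → ℝ) ⬝ᵥ (fR y))
          = (y : Fin n → ℝ) ⬝ᵥ (M *ᵥ y) - t * ((y : Fin n → ℝ) ⬝ᵥ y) := hq' 
        _ < 0 := this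
    have h2 : 0 ≤ (fR y : Fin n → ℝ) ⬝ᵥ (N *ᵥ (fR y)) - t * ((fR y : Fin n → ℝ) ⬝ᵥ (fR y)) :=
      quad_nonneg_on_span hN t (P := fun j => ¬ hN.eigenvalues j < t)
        (fun j h => not_lt.mp h) hx2
    linarith
  have hsum := Submodule.finrank_sup_add_finrank_inf_eq (W.map fR) U
  rw [hdisj] at hsum
  simp only [finrank_bot, add_zero] at hsum
  have hle : Module.finrank ℝ ((W.map fR) ⊔ U : Submodule ℝ (EuclideanSpace ℝ (Fin n))) ≤ n := by
    have := Submodule.finrank_le ((W.map fR) ⊔ U : Submodule ℝ (EuclideanSpace ℝ (Fin n)))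
    simpa [finrank_euclideanSpace] using this
  have hcompl : Fintype.card {j // ¬ hN.eigenvalues j < t}
      = n - Fintype.card {j // hN.eigenvalues j < t} := by
    rw [Fintype.card_subtype_compl]
    simp
  have hcard_le : Fintype.card {j // hN.eigenvalues j < t} ≤ n := by
    simpa using Fintype.card_subtype_le (fun j : Fin n => hN.eigenvalues j < t)
  rw [hdimW, hdimU, hcompl] at hsum
  omega


lemma dp_congr (Q M : Matrix (Fin n) (Fin n) ℝ) (hQ : Qᵀ = Q) (y : Fin n → ℝ) :
    (Q *ᵥ y) ⬝ᵥ (M *ᵥ (Q *ᵥ y)) = y ⬝ᵥ ((Q * M * Q) *ᵥ y) := by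
  symm
  calc y ⬝ᵥ ((Q * M * Q) *ᵥ y)
      = y ⬝ᵥ (Q *ᵥ ((M * Q) *ᵥ y)) := by rw [Matrix.mulVec_mulVec, ← Matrix.mul_assoc]
    _ = (Q *ᵥ y) ⬝ᵥ ((M * Q) *ᵥ y) := by
        rw [Matrix.dotProduct_mulVec, ← Matrix.mulVec_transpose, hQ]
    _ = (Q *ᵥ y) ⬝ᵥ (M *ᵥ (Q *ᵥ y)) := by rw [Matrix.mulVec_mulVec]

lemma dq (C D : Matrix (Fin n) (Fin n) ℝ) (t : ℝ) (y : Fin n → ℝ) :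
    y ⬝ᵥ (C *ᵥ y) - t * (y ⬝ᵥ (D *ᵥ y)) = y ⬝ᵥ ((C - t • D) *ᵥ y) := by
  rw [Matrix.sub_mulVec, dotProduct_sub, Matrix.smul_mulVec,
    dotProduct_smul, smul_eq_mul]

end SylAux


/-- Lemma (Sylvester-type eigenvalue count): for symmetric `A`, `B` with `1 + B`
positive definite, the number of eigenvalues of `A` below `t` equals the number of
eigenvalues of the generalized eigenvalue problem `(A + t•B)u = λ(1+B)u`
(i.e. of `(1+B)^{-1/2}(A + t•B)(1+B)^{-1/2}`) below `t`. -/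
theorem stmt_0 {n : ℕ} (A B : Matrix (Fin n) (Fin n) ℝ)
    (hA : A.IsHermitian) (hB : B.IsHermitian)
    (hIB : (1 + B).PosDef) (t : ℝ)
    (S : Matrix (Fin n) (Fin n) ℝ) (hS : S = (hIB.posSemidef.sqrt)⁻¹)
    (hG : (S * (A + t • B) * S).IsHermitian) :
    Fintype.card {j // hA.eigenvalues j < t} =
      Fintype.card {j // hG.eigenvalues j < t} := by
  classical
  set Q := hIB.posSemidef.sqrt with hQ
  set G := S * (A + t • B) * S with hGdef
  have hQQ : Q * Q = 1 + B := SylAux.sqrt_mul_self' hIB.posSemidef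
  have hQd : IsUnit Q.det := by
    have hdet : Q.det * Q.det = (1 + B).det := by rw [← Matrix.det_mul, hQQ]
    have hpos : 0 < (1 + B).det := hIB.det_pos
    refine isUnit_iff_ne_zero.mpr fun h => ?_
    rw [h, mul_zero] at hdet
    exact hpos.ne hdet
  have hSQ : S * Q = 1 := by rw [hS]; exact Matrix.nonsing_inv_mul Q hQd
  have hQS : Q * S = 1 := by rw [hS]; exact Matrix.mul_nonsing_inv Q hQd
  have hQh : Qᵀ = Q := by
    rw [← Matrix.conjTranspose_eq_transpose_of_trivial]
    exact SylAux.sqrt_conjTranspose' hIB.posSemidef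
  have hSh : Sᵀ = S := by rw [hS, Matrix.transpose_nonsing_inv, hQh]
  have hQinj : Function.Injective Q.mulVec := fun a b h => by
    have : (S * Q) *ᵥ a = (S * Q) *ᵥ b := by
      rw [← Matrix.mulVec_mulVec, ← Matrix.mulVec_mulVec, h]
    simpa [hSQ, Matrix.one_mulVec] using this
  have hSinj : Function.Injective S.mulVec := fun a b h => by
    have : (Q * S) *ᵥ a = (Q * S) *ᵥ b := by
      rw [← Matrix.mulVec_mulVec, ← Matrix.mulVec_mulVec, h]
    simpa [hQS, Matrix.one_mulVec] using this
  have id1 : Q * G * Q - t • (Q * 1 * Q) = A - t • (1 : Matrix (Fin n) (Fin n) ℝ) := by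
    have e : Q * G * Q = A + t • B := by
      have h : Q * G * Q = (Q * S) * (A + t • B) * (S * Q) := by
        rw [hGdef]; noncomm_ring
      rw [h, hQS, hSQ, one_mul, mul_one]
    rw [e, mul_one, hQQ]
    module
  have hSBS : S * (1 + B) * S = 1 := by
    have h : S * (1 + B) * S = (S * Q) * (Q * S) := by rw [← hQQ]; noncomm_ring
    rw [h, hSQ, hQS, one_mul]
  have id2 : S * A * S - t • (S * 1 * S) = G - t • (1 : Matrix (Fin n) (Fin n) ℝ) := by
    have h1 : S * (A + t • B) * S = S * A * S + t • (S * B * S) := by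
      simp [Matrix.mul_add, Matrix.add_mul, Matrix.mul_smul, Matrix.smul_mul]
    have h2 : S * (1 + B) * S = S * 1 * S + S * B * S := by
      simp [Matrix.mul_add, Matrix.add_mul]
    rw [hGdef, h1]
    conv_rhs => rw [← hSBS, h2]
    module
  have hq1 : ∀ y : Fin n → ℝ,
      (Q *ᵥ y) ⬝ᵥ (G *ᵥ (Q *ᵥ y)) - t * ((Q *ᵥ y) ⬝ᵥ (Q *ᵥ y))
        = y ⬝ᵥ (A *ᵥ y) - t * (y ⬝ᵥ y) := by
    intro y
    have h0 : (Q *ᵥ y) ⬝ᵥ (Q *ᵥ y) = (Q *ᵥ y) ⬝ᵥ ((1 : Matrix (Fin n) (Fin n) ℝ) *ᵥ (Q *ᵥ y)) := by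
      rw [Matrix.one_mulVec]
    rw [h0, SylAux.dp_congr Q G hQh, SylAux.dp_congr Q 1 hQh, SylAux.dq, id1, ← SylAux.dq,
      Matrix.one_mulVec]
  have hq2 : ∀ y : Fin n → ℝ,
      (S *ᵥ y) ⬝ᵥ (A *ᵥ (S *ᵥ y)) - t * ((S *ᵥ y) ⬝ᵥ (S *ᵥ y))
        = y ⬝ᵥ (G *ᵥ y) - t * (y ⬝ᵥ y) := by
    intro y
    have h0 : (S *ᵥ y) ⬝ᵥ (S *ᵥ y) = (S *ᵥ y) ⬝ᵥ ((1 : Matrix (Fin n) (Fin n) ℝ) *ᵥ (S *ᵥ y)) := by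
      rw [Matrix.one_mulVec]
    rw [h0, SylAux.dp_congr S A hSh, SylAux.dp_congr S 1 hSh, SylAux.dq, id2, ← SylAux.dq,
      Matrix.one_mulVec]
  exact le_antisymm (SylAux.card_le hA hG t Q hQinj hq1) (SylAux.card_le hG hA t S hSinj hq2)
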